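/- Let a > 0 and b = a/√2, and define the plane curve ρ(t) = (x(t), y(t)) = (a·cos t + b·cos 2t, a·sin t − b·sin 2t). Then ρ is regular (x'(t)² + y'(t)² > 0 for all t) and the signed curvature numerator x'(t)·y''(t) − y'(t)·x''(t) = a²·(√2·cos 3t − 3) is strictly negative for all t; in particular, the curvature of ρ never vanishes. -/

import Mathlib

private lemma hd2 (t : ℝ) : HasDerivAt (fun s : ℝ => 2 * s) 2 t := by
  simpa using (hasDerivAt_id t).const_mul 2

theorem planar_epicycle_nonvanishing_curvature (a b : ℝ) (ha : 0 < a)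
    (hb : b = a / Real.sqrt 2) (x y : ℝ → ℝ)
    (hx : ∀ t, x t = a * Real.cos t + b * Real.cos (2 * t))
    (hy : ∀ t, y t = a * Real.sin t - b * Real.sin (2 * t)) :
    ∀ t : ℝ,
      0 < (deriv x t) ^ 2 + (deriv y t) ^ 2 ∧
      deriv x t * deriv (deriv y) t - deriv y t * deriv (deriv x) t =
        a ^ 2 * (Real.sqrt 2 * Real.cos (3 * t) - 3) ∧
      a ^ 2 * (Real.sqrt 2 * Real.cos (3 * t) - 3) < 0 := by
  have hxf : x = fun t => a * Real.cos t + b * Real.cos (2 * t) := funext hx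
  have hyf : y = fun t => a * Real.sin t - b * Real.sin (2 * t) := funext hy
  have Hx : ∀ t : ℝ, HasDerivAt x (-(a * Real.sin t) - 2 * b * Real.sin (2 * t)) t := by
    intro t
    rw [hxf]
    have h1 : HasDerivAt (fun s : ℝ => a * Real.cos s) (a * -Real.sin t) t :=
      (Real.hasDerivAt_cos t).const_mul a
    have h3 : HasDerivAt (fun s : ℝ => Real.cos (2 * s)) (-Real.sin (2 * t) * 2) t :=
      (Real.hasDerivAt_cos (2 * t)).comp t (hd2 t)
    have := h1.add (h3.const_mul b)
    exact this.congr_deriv (by ring)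
  have Hy : ∀ t : ℝ, HasDerivAt y (a * Real.cos t - 2 * b * Real.cos (2 * t)) t := by
    intro t
    rw [hyf]
    have h1 : HasDerivAt (fun s : ℝ => a * Real.sin s) (a * Real.cos t) t :=
      (Real.hasDerivAt_sin t).const_mul a
    have h3 : HasDerivAt (fun s : ℝ => Real.sin (2 * s)) (Real.cos (2 * t) * 2) t :=
      (Real.hasDerivAt_sin (2 * t)).comp t (hd2 t)
    have := h1.sub (h3.const_mul b)
    exact this.congr_deriv (by ring)
  have hdx : deriv x = fun t => -(a * Real.sin t) - 2 * b * Real.sin (2 * t) :=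
    funext fun t => (Hx t).deriv
  have hdy : deriv y = fun t => a * Real.cos t - 2 * b * Real.cos (2 * t) :=
    funext fun t => (Hy t).deriv
  have Hx2 : ∀ t : ℝ, HasDerivAt (deriv x) (-(a * Real.cos t) - 4 * b * Real.cos (2 * t)) t := by
    intro t
    rw [hdx]
    have h1 : HasDerivAt (fun s : ℝ => a * Real.sin s) (a * Real.cos t) t :=
      (Real.hasDerivAt_sin t).const_mul a
    have h3 : HasDerivAt (fun s : ℝ => Real.sin (2 * s)) (Real.cos (2 * t) * 2) t :=
      (Real.hasDerivAt_sin (2 * t)).comp t (hd2 t)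
    have := h1.neg.sub ((h3.const_mul b).const_mul 2)
    rw [show (fun t => -(a * Real.sin t) - 2 * b * Real.sin (2 * t)) = ((-fun s => a * Real.sin s) - fun y => 2 * (b * Real.sin (2 * y))) by
      funext s; simp only [Pi.sub_apply, Pi.neg_apply]; ring]
    exact this.congr_deriv (by ring)
  have Hy2 : ∀ t : ℝ, HasDerivAt (deriv y) (-(a * Real.sin t) + 4 * b * Real.sin (2 * t)) t := by
    intro t
    rw [hdy]
    have h1 : HasDerivAt (fun s : ℝ => a * Real.cos s) (a * -Real.sin t) t :=
      (Real.hasDerivAt_cos t).const_mul a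
    have h3 : HasDerivAt (fun s : ℝ => Real.cos (2 * s)) (-Real.sin (2 * t) * 2) t :=
      (Real.hasDerivAt_cos (2 * t)).comp t (hd2 t)
    have := h1.sub ((h3.const_mul b).const_mul 2)
    rw [show (fun t => a * Real.cos t - 2 * b * Real.cos (2 * t)) = ((fun s => a * Real.cos s) - fun y => 2 * (b * Real.cos (2 * y))) by
      funext s; simp only [Pi.sub_apply]; ring]
    exact this.congr_deriv (by ring)
  intro t
  have e1 : deriv x t = -(a * Real.sin t) - 2 * b * Real.sin (2 * t) := (Hx t).deriv
  have e2 : deriv y t = a * Real.cos t - 2 * b * Real.cos (2 * t) := (Hy t).deriv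
  have e3 : deriv (deriv x) t = -(a * Real.cos t) - 4 * b * Real.cos (2 * t) := (Hx2 t).deriv
  have e4 : deriv (deriv y) t = -(a * Real.sin t) + 4 * b * Real.sin (2 * t) := (Hy2 t).deriv
  have c3 : Real.cos (3 * t) = Real.cos t * Real.cos (2 * t) - Real.sin t * Real.sin (2 * t) := by
    rw [show (3 : ℝ) * t = t + 2 * t by ring, Real.cos_add]
  have p1 : Real.sin t ^ 2 + Real.cos t ^ 2 = 1 := Real.sin_sq_add_cos_sq t
  have p2 : Real.sin (2 * t) ^ 2 + Real.cos (2 * t) ^ 2 = 1 := Real.sin_sq_add_cos_sq (2 * t)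
  have hr : Real.sqrt 2 ^ 2 = 2 := Real.sq_sqrt (by norm_num)
  have hrpos : (0 : ℝ) < Real.sqrt 2 := Real.sqrt_pos.2 (by norm_num)
  have hba : b * Real.sqrt 2 = a := by
    rw [hb]; field_simp
  have hc3 : Real.cos (3 * t) ≤ 1 := Real.cos_le_one _
  have hrlt : Real.sqrt 2 < 3 := by
    nlinarith [hr, hrpos]
  have hbpos : 0 < b := by rw [hb]; positivity
  set s1 := Real.sin t
  set c1 := Real.cos t
  set s2 := Real.sin (2 * t)
  set c2 := Real.cos (2 * t)
  refine ⟨?_, ?_, ?_⟩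
  · rw [e1, e2]
    have key1 : (-(a * s1) - 2 * b * s2) ^ 2 + (a * c1 - 2 * b * c2) ^ 2 =
        a ^ 2 * (s1 ^ 2 + c1 ^ 2) + 4 * b ^ 2 * (s2 ^ 2 + c2 ^ 2)
          - 4 * a * b * (c1 * c2 - s1 * s2) := by ring
    rw [key1, p1, p2, ← c3]
    have hr15 : Real.sqrt 2 < 3 / 2 := by nlinarith [hr, hrpos]
    have habpos : 0 < 4 * a * b := by positivity
    have h6 : (4 * a * b) * Real.cos (3 * t) ≤ 4 * a * b :=
      mul_le_of_le_one_right habpos.le hc3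
    nlinarith [h6, hr, hba, hr15, mul_pos hbpos hbpos]
  · rw [e1, e2, e3, e4, c3]
    rw [← hba]
    linear_combination (b ^ 2 * (4 - Real.sqrt 2 * (c1 * c2 - s1 * s2))) * hr
      + (b ^ 2 * Real.sqrt 2 ^ 2) * p1 - (8 * b ^ 2) * p2
  · have h5 : Real.sqrt 2 * Real.cos (3 * t) - 3 < 0 := by
      have := mul_le_of_le_one_right hrpos.le hc3
      linarith
    exact mul_neg_of_pos_of_neg (by positivity) h5
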